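/- Let r ≥ 1 and let m_1, …, m_r be integers with m_j ≥ 2 for all j. Then there exist integers β_{(j_1,…,j_s)}, indexed by the nonempty sequences 1 ≤ j_1 < … < j_s ≤ r with 1 ≤ s ≤ r−1, such that H_{(m_1,…,m_r)} = m_1 m_2^2 ⋯ m_r^r · h_r − Σ_{s=1}^{r−1} Σ_{1 ≤ j_1 < … < j_s ≤ r} β_{(j_1,…,j_s)} · H_{(m_{j_1},…,m_{j_s})} in ℤ⟦q⟧, and moreover each β_{(j_1,…,j_s)} is divisible by the product ∏_{t} μ(m_t, t) taken over all t ∈ {1,…,r} with t ∉ {j_1,…,j_s}. -/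

import Mathlib

/-- The operator `U_m` on `ℤ⟦q⟧`, sending `∑ a(n) qⁿ` to `∑ a(m·n) qⁿ`. -/
noncomputable def U (m : ℕ) (f : PowerSeries ℤ) : PowerSeries ℤ :=
  PowerSeries.mk fun n => PowerSeries.coeff (m * n) f

/-- `h r = q / (1-q)^(r+1)`; here `invUnitsSub 1` is the inverse of `1 - q` in `ℤ⟦q⟧`. -/
noncomputable def h (r : ℕ) : PowerSeries ℤ :=
  PowerSeries.X * (PowerSeries.invUnitsSub (1 : ℤˣ)) ^ (r + 1)

/-- Auxiliary: the series `H` defined by recursion on a reversed index list. -/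
noncomputable def HserRev : List ℕ → PowerSeries ℤ
  | [] => PowerSeries.X * PowerSeries.invUnitsSub (1 : ℤˣ)
  | mhead :: rest => U mhead (PowerSeries.invUnitsSub (1 : ℤˣ) * HserRev rest)

/-- `Hser [m₁, …, m_k] = H_{(m₁,…,m_k)}`: one has `Hser [] = H_∅ = q/(1-q)` and
`H_{(m₁,…,m_k)} = U_{m_k}((1/(1-q)) · H_{(m₁,…,m_{k-1})})`. -/
noncomputable def Hser (l : List ℕ) : PowerSeries ℤ := HserRev l.reverse

/-- `μ(a,b) = a / gcd(a,b)`. -/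
def mu (a b : ℕ) : ℕ := a / Nat.gcd a b

open PowerSeries Finset fwdDiff

noncomputable def iv : PowerSeries ℤ := PowerSeries.invUnitsSub (1 : ℤˣ)

lemma coeff_iv (n : ℕ) : coeff n iv = 1 := by
  simp [iv, coeff_invUnitsSub]

lemma iv_mul_one_sub : iv * (1 - X) = 1 := by
  have := invUnitsSub_mul_sub (R := ℤ) 1
  simpa [iv] using this

lemma one_sub_pow_mul_iv_pow (t : ℕ) : (1 - X : PowerSeries ℤ) ^ t * iv ^ t = 1 := by
  rw [← mul_pow, mul_comm, iv_mul_one_sub, one_pow]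

lemma coeff_iv_pow (j n : ℕ) : coeff n (iv ^ (j + 1)) = (n + j).choose j := by
  induction j generalizing n with
  | zero => simp [coeff_iv]
  | succ j ih =>
    rw [pow_succ, coeff_mul]
    have : ∀ p ∈ Finset.HasAntidiagonal.antidiagonal n,
        (coeff p.1 (iv ^ (j+1))) * coeff p.2 iv = ((p.1 + j).choose j : ℤ) := by
      intro p hp; rw [ih, coeff_iv, mul_one]
    rw [Finset.sum_congr rfl this, Finset.Nat.sum_antidiagonal_eq_sum_range_succ_mk]
    have : ∑ i ∈ range (n+1), (((i + j).choose j : ℤ)) = (((n + j + 1).choose (j+1) : ℕ) : ℤ) := by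
      rw [← Nat.cast_sum]
      norm_cast
      have := Nat.sum_Icc_choose (n + j) j
      rw [← this]
      apply Finset.sum_nbij' (fun i => i + j) (fun i => i - j)
      · intro a ha; simp only [mem_range] at ha; simp only [mem_Icc]; omega
      · intro a ha; simp only [mem_Icc] at ha; simp only [mem_range]; omega
      · intro a ha; omega
      · intro a ha; simp only [mem_Icc] at ha; omega
      · intro a ha; rfl
    rw [this]; norm_cast

lemma coeff_e (j n : ℕ) : coeff n ((X : PowerSeries ℤ) ^ j * iv ^ (j + 1)) = n.choose j := by
  rw [coeff_X_pow_mul']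
  rcases le_or_gt j n with hle | hlt
  · rw [if_pos hle, coeff_iv_pow]
    congr 2; omega
  · rw [if_neg (by omega), Nat.choose_eq_zero_of_lt hlt, Nat.cast_zero]

lemma h_eq (r : ℕ) : h r = X * iv ^ (r + 1) := rfl

lemma coeff_h (r n : ℕ) : coeff n (h r) = if n = 0 then 0 else ((n - 1 + r).choose r : ℤ) := by
  cases n with
  | zero => simp [h, coeff_zero_X_mul]
  | succ n => rw [h_eq, coeff_succ_X_mul, coeff_iv_pow]; simp

lemma coeff_U (m : ℕ) (f : PowerSeries ℤ) (n : ℕ) : coeff n (U m f) = coeff (m * n) f := by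
  simp [U]
lemma U_C_mul (m : ℕ) (a : ℤ) (f : PowerSeries ℤ) : U m (C a * f) = C a * U m f := by
  ext n; rw [coeff_U, coeff_C_mul, coeff_C_mul, coeff_U]

lemma U_sub (m : ℕ) (f g : PowerSeries ℤ) : U m (f - g) = U m f - U m g := by
  ext n; simp [coeff_U]

lemma U_sum {α : Type*} (m : ℕ) (s : Finset α) (f : α → PowerSeries ℤ) :
    U m (∑ a ∈ s, f a) = ∑ a ∈ s, U m (f a) := by
  ext n; simp [coeff_U]

/-- Newton expansion of a power series in the basis `X^j/(1-X)^(j+1)`. -/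
lemma mk_eq_sum_newton (F : ℕ → ℤ) (N : ℕ) (hv : ∀ j, N < j → (fwdDiff 1)^[j] F 0 = 0) :
    PowerSeries.mk F = ∑ j ∈ range (N + 1), C ((fwdDiff 1)^[j] F 0) * (X ^ j * iv ^ (j + 1)) := by
  ext n
  rw [coeff_mk, map_sum]
  have hco : ∀ j, coeff n (C ((fwdDiff 1)^[j] F 0) * (X ^ j * iv ^ (j + 1)))
      = (n.choose j : ℤ) * (fwdDiff 1)^[j] F 0 := by
    intro j; rw [coeff_C_mul, coeff_e]; ring
  simp_rw [hco]
  have hnewton := shift_eq_sum_fwdDiff_iter (1 : ℕ) F n 0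
  simp only [zero_add, smul_eq_mul, nsmul_eq_mul] at hnewton
  rw [show n * 1 = n by ring] at hnewton
  set M := max n N with hM
  have h1 : ∑ j ∈ range (n + 1), (n.choose j : ℤ) * (fwdDiff 1)^[j] F 0
      = ∑ j ∈ range (M + 1), (n.choose j : ℤ) * (fwdDiff 1)^[j] F 0 := by
    apply Finset.sum_subset
    · intro x hx; simp only [mem_range] at *; omega
    · intro x _ hx; simp only [mem_range] at hx
      rw [Nat.choose_eq_zero_of_lt (by omega), Nat.cast_zero, zero_mul]
  have h2 : ∑ j ∈ range (N + 1), (n.choose j : ℤ) * (fwdDiff 1)^[j] F 0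
      = ∑ j ∈ range (M + 1), (n.choose j : ℤ) * (fwdDiff 1)^[j] F 0 := by
    apply Finset.sum_subset
    · intro x hx; simp only [mem_range] at *; omega
    · intro x _ hx; simp only [mem_range] at hx
      rw [hv x (by omega), mul_zero]
  rw [h2, ← h1, ← hnewton]

lemma fwdDiff_zero_fun (t : ℕ) : (fwdDiff 1)^[t] (fun _ => (0:ℤ) : ℕ → ℤ) = fun _ => 0 := by
  induction t with
  | zero => rfl
  | succ t ih =>
    rw [Function.iterate_succ_apply]
    have : fwdDiff 1 (fun _ => (0:ℤ) : ℕ → ℤ) = fun _ => 0 := fwdDiff_const 1 0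
    rw [this, ih]

/-- key finite-difference computation -/
lemma fwdDiff_iter_choose_mul (m k : ℕ) : ∀ c : ℕ,
    (fwdDiff 1)^[k] (fun n => (((m * n + c).choose k : ℕ) : ℤ)) = fun _ => (m : ℤ) ^ k := by
  induction k with
  | zero => intro c; funext n; simp
  | succ k ih =>
    intro c
    rw [Function.iterate_succ_apply]
    have hstep : fwdDiff 1 (fun n => (((m * n + c).choose (k+1) : ℕ) : ℤ))
        = ∑ t ∈ range m, (fun n => (((m * n + (c + t)).choose k : ℕ) : ℤ)) := by
      funext n
      rw [Finset.sum_apply]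
      have htel : ∑ t ∈ range m,
          ((((m * n + c + (t+1)).choose (k+1) : ℕ) : ℤ) - ((m * n + c + t).choose (k+1) : ℕ)) =
          (((m * n + c + m).choose (k+1) : ℕ) : ℤ) - ((m * n + c + 0).choose (k+1) : ℕ) :=
        Finset.sum_range_sub (fun t => (((m * n + c + t).choose (k+1) : ℕ) : ℤ)) m
      have hterm : ∀ t, (((m * n + c + (t+1)).choose (k+1) : ℕ) : ℤ)
          - ((m * n + c + t).choose (k+1) : ℕ) = ((m * n + (c + t)).choose k : ℕ) := by
        intro t
        have := Nat.choose_succ_succ (m * n + c + t) k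
        have harg : m * n + c + (t + 1) = (m * n + c + t) + 1 := by ring
        rw [harg, this]
        push_cast
        have harg2 : m * n + c + t = m * n + (c + t) := by ring
        rw [harg2]; ring
      simp only [fwdDiff]
      rw [← Finset.sum_congr rfl (fun t _ => hterm t), htel]
      have : m * (n + 1) + c = m * n + c + m := by ring
      rw [this]; norm_num
    rw [hstep, fwdDiff_iter_finset_sum]
    funext n
    rw [Finset.sum_apply]
    have : ∀ t ∈ range m, ((fwdDiff 1)^[k] fun n => (((m * n + (c + t)).choose k : ℕ) : ℤ)) n
        = (m : ℤ) ^ k := by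
      intro t _; rw [ih (c + t)]
    rw [Finset.sum_congr rfl this, Finset.sum_const, Finset.card_range]
    push_cast; ring

lemma fwdDiff_top (m k c : ℕ) :
    (fwdDiff 1)^[k] (fun n => (((m * n + c).choose k : ℕ) : ℤ)) 0 = (m : ℤ) ^ k := by
  rw [fwdDiff_iter_choose_mul]

lemma fwdDiff_high (m k c j : ℕ) (hj : k < j) :
    (fwdDiff 1)^[j] (fun n => (((m * n + c).choose k : ℕ) : ℤ)) 0 = 0 := by
  obtain ⟨t, rfl⟩ : ∃ t, j = (t + 1) + k := ⟨j - k - 1, by omega⟩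
  rw [Function.iterate_add_apply, fwdDiff_iter_choose_mul]
  rw [Function.iterate_succ_apply]
  have : fwdDiff 1 (fun _ => (m:ℤ)^k : ℕ → ℤ) = fun _ => 0 := fwdDiff_const 1 _
  rw [this, fwdDiff_zero_fun]
lemma mu_dvd_choose (m k n : ℕ) (hm : 1 ≤ m) (hk : 1 ≤ k) :
    mu m k ∣ (m * n + (k - 1)).choose k := by
  set N := m * n + (k - 1) with hN
  have key : N.choose k * k = N.choose (k-1) * (m * n) := by
    have h1 := Nat.choose_succ_right_eq N (k - 1)
    have h2 : k - 1 + 1 = k := by omega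
    rw [h2] at h1
    have h3 : N - (k - 1) = m * n := by omega
    rw [h3] at h1; exact h1
  have hmdvd : m ∣ N.choose k * k := ⟨n * N.choose (k-1), by rw [key]; ring⟩
  set d := Nat.gcd m k with hd
  have hdpos : 0 < d := Nat.gcd_pos_of_pos_left k hm
  have hcop : Nat.Coprime (m / d) (k / d) := Nat.coprime_div_gcd_div_gcd hdpos
  obtain ⟨t, ht⟩ := hmdvd
  have hdm : d * (m / d) = m := Nat.mul_div_cancel' (Nat.gcd_dvd_left m k)
  have hdk : d * (k / d) = k := Nat.mul_div_cancel' (Nat.gcd_dvd_right m k)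
  have h4 : d * (N.choose k * (k / d)) = d * ((m / d) * t) := by
    calc d * (N.choose k * (k / d)) = N.choose k * (d * (k / d)) := by ring
    _ = N.choose k * k := by rw [hdk]
    _ = m * t := ht
    _ = (d * (m / d)) * t := by rw [hdm]
    _ = d * ((m / d) * t) := by ring
  have h5 : N.choose k * (k / d) = (m / d) * t := Nat.eq_of_mul_eq_mul_left hdpos h4
  have h6 : (m / d) ∣ N.choose k * (k / d) := ⟨t, h5⟩
  exact (Nat.Coprime.dvd_mul_right hcop).mp h6

lemma mu_dvd_fwdDiff (m k j : ℕ) (hm : 1 ≤ m) (hk : 1 ≤ k) :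
    ((mu m k : ℕ) : ℤ) ∣ (fwdDiff 1)^[j] (fun n => (((m * n + (k - 1)).choose k : ℕ) : ℤ)) 0 := by
  rw [fwdDiff_iter_eq_sum_shift]
  apply Finset.dvd_sum
  intro i _
  rw [zsmul_eq_mul]
  apply Dvd.dvd.mul_left
  exact Int.natCast_dvd_natCast.mpr (mu_dvd_choose m k _ hm hk)

/-- conversion of the Newton basis element to the `h` basis -/
lemma e_eq_sum_h (j : ℕ) (hj : 1 ≤ j) :
    X ^ j * iv ^ (j + 1) =
      ∑ s ∈ Icc 1 j, C (R := ℤ) ((-1) ^ (j - s) * ((j-1).choose (s-1) : ℕ)) * h s := by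
  obtain ⟨i, rfl⟩ : ∃ i, j = i + 1 := ⟨j - 1, by omega⟩
  have hbin : (X : PowerSeries ℤ) ^ i = ∑ t ∈ range (i + 1),
      C (R := ℤ) ((-1) ^ (t + i) * (i.choose t : ℕ)) * (1 - X) ^ (i - t) := by
    have := sub_pow (1 : PowerSeries ℤ) (1 - X) i
    simp only [one_pow, one_mul, sub_sub_cancel] at this
    rw [this]
    apply Finset.sum_congr rfl
    intro t _
    rw [map_mul, map_pow, map_neg, map_one, map_natCast]
    ring
  have key : X ^ (i+1) * iv ^ (i + 1 + 1) = X * (X ^ i * iv ^ (i + 2)) := by ring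
  rw [key, hbin, Finset.sum_mul, Finset.mul_sum]
  have hterm : ∀ t ∈ range (i + 1),
      X * (C (R := ℤ) ((-1) ^ (t + i) * (i.choose t : ℕ)) * (1 - X) ^ (i - t) * iv ^ (i + 2))
      = C (R := ℤ) ((-1) ^ (t + i) * (i.choose t : ℕ)) * h (i + 1 - (i - t)) := by
    intro t ht
    simp only [mem_range] at ht
    have hsplit : iv ^ (i + 2) = iv ^ (i - t) * iv ^ (i + 1 - (i - t) + 1) := by
      rw [← pow_add]; congr 1; omega
    rw [hsplit, h_eq]
    calc X * (C (R := ℤ) ((-1) ^ (t + i) * (i.choose t : ℕ)) * (1 - X) ^ (i - t) *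
          (iv ^ (i - t) * iv ^ (i + 1 - (i - t) + 1)))
        = C (R := ℤ) ((-1) ^ (t + i) * (i.choose t : ℕ)) * ((1 - X) ^ (i - t) * iv ^ (i - t)) *
          (X * iv ^ (i + 1 - (i - t) + 1)) := by ring
      _ = C (R := ℤ) ((-1) ^ (t + i) * (i.choose t : ℕ)) * (X * iv ^ (i + 1 - (i - t) + 1)) := by
          rw [one_sub_pow_mul_iv_pow]; ring
  rw [Finset.sum_congr rfl hterm]
  apply Finset.sum_nbij' (fun t => i + 1 - (i - t)) (fun s => i - (i + 1 - s))
  · intro t ht; simp only [mem_range] at ht; simp only [mem_Icc]; omega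
  · intro s hs; simp only [mem_Icc] at hs; simp only [mem_range]; omega
  · intro t ht; simp only [mem_range] at ht; omega
  · intro s hs; simp only [mem_Icc] at hs; omega
  · intro t ht
    simp only [mem_range] at ht
    have h1 : i + 1 - (i - t) - 1 = t := by omega
    have h2 : i + 1 - (i + 1 - (i - t)) = i - t := by omega
    have h3 : (i + 1 : ℕ) - 1 = i := by omega
    rw [h1, h2, h3]
    have h4 : ((-1 : ℤ)) ^ (t + i) = (-1) ^ (i - t) := by
      have : t + i = (i - t) + 2 * t := by omega
      rw [this, pow_add, pow_mul]; norm_num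
    rw [h4]
/-- Lemma A: expansion of `U m (h k)` in the `h` basis. -/
lemma lemA (m k : ℕ) (hm : 1 ≤ m) (hk : 1 ≤ k) :
    ∃ b : ℕ → ℤ, (∀ s, ((mu m k : ℕ) : ℤ) ∣ b s) ∧
      U m (h k) = C ((m : ℤ) ^ k) * h k + ∑ s ∈ Icc 1 (k-1), C (b s) * h s := by
  set F : ℕ → ℤ := fun n => (((m * n + (k - 1)).choose k : ℕ) : ℤ) with hF
  set d : ℕ → ℤ := fun j => (fwdDiff 1)^[j] F 0 with hd
  set σ : ℕ → ℕ → ℤ := fun j s => (-1) ^ (j - s) * ((j-1).choose (s-1) : ℕ) with hσ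
  refine ⟨fun s => ∑ j ∈ Icc s k, d j * σ j s, ?_, ?_⟩
  · intro s
    apply Finset.dvd_sum
    intro j _
    exact Dvd.dvd.mul_right (mu_dvd_fwdDiff m k j hm hk) _
  have hUF : U m (h k) = PowerSeries.mk F := by
    ext n
    rw [coeff_U, coeff_h, coeff_mk]
    rcases Nat.eq_zero_or_pos n with rfl | hn
    · rw [if_pos (by simp)]
      have : m * 0 + (k - 1) = k - 1 := by omega
      rw [hF]; simp only [this]
      rw [Nat.choose_eq_zero_of_lt (by omega)]; simp
    · rw [if_neg (by positivity)]
      have : m * n - 1 + k = m * n + (k - 1) := by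
        have : 1 ≤ m * n := Nat.one_le_iff_ne_zero.mpr (by positivity)
        omega
      rw [this]
  have hnewton : PowerSeries.mk F = ∑ j ∈ range (k + 1), C (d j) * (X ^ j * iv ^ (j + 1)) :=
    mk_eq_sum_newton F k (fun j hj => fwdDiff_high m k (k-1) j hj)
  have hd0 : d 0 = 0 := by
    rw [hd]
    simp only [Function.iterate_zero, id_eq, hF]
    rw [Nat.choose_eq_zero_of_lt (by omega)]; simp
  have hIcc : ∑ j ∈ range (k + 1), C (d j) * (X ^ j * iv ^ (j + 1))
      = ∑ j ∈ Icc 1 k, C (d j) * (X ^ j * iv ^ (j + 1)) := by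
    symm
    apply Finset.sum_subset
    · intro x hx; simp only [mem_Icc] at hx; simp only [mem_range]; omega
    · intro x hx hx'
      simp only [mem_range] at hx; simp only [mem_Icc] at hx'
      have : x = 0 := by omega
      rw [this, hd0]; simp
  have hexp : ∑ j ∈ Icc 1 k, C (d j) * (X ^ j * iv ^ (j + 1))
      = ∑ j ∈ Icc 1 k, ∑ s ∈ Icc 1 j, C (d j * σ j s) * h s := by
    apply Finset.sum_congr rfl
    intro j hj
    simp only [mem_Icc] at hj
    rw [e_eq_sum_h j hj.1, Finset.mul_sum]
    apply Finset.sum_congr rfl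
    intro s _
    show C (d j) * (C (R := ℤ) ((-1) ^ (j - s) * (((j-1).choose (s-1) : ℕ) : ℤ)) * h s)
        = C (d j * ((-1) ^ (j - s) * (((j-1).choose (s-1) : ℕ) : ℤ))) * h s
    simp only [map_mul, mul_assoc]
  have hswap : ∑ j ∈ Icc 1 k, ∑ s ∈ Icc 1 j, C (d j * σ j s) * h s
      = ∑ s ∈ Icc 1 k, ∑ j ∈ Icc s k, C (d j * σ j s) * h s := by
    apply Finset.sum_comm'
    intro j s
    simp only [mem_Icc]; omega
  have hsplit : ∑ s ∈ Icc 1 k, ∑ j ∈ Icc s k, C (d j * σ j s) * h s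
      = (∑ j ∈ Icc k k, C (d j * σ j k) * h k) +
        ∑ s ∈ Icc 1 (k-1), ∑ j ∈ Icc s k, C (d j * σ j s) * h s := by
    have : Icc 1 k = insert k (Icc 1 (k-1)) := by
      ext x; simp only [mem_Icc, mem_insert]; omega
    rw [this, Finset.sum_insert (by simp only [mem_Icc]; omega)]
  have hdk : d k = (m : ℤ) ^ k := fwdDiff_top m k (k-1)
  have hσkk : σ k k = 1 := by
    rw [hσ]; simp
  rw [hUF, hnewton, hIcc, hexp, hswap, hsplit, Finset.Icc_self, Finset.sum_singleton,
    hdk, hσkk, mul_one]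
  congr 1
  apply Finset.sum_congr rfl
  intro s _
  rw [map_sum, Finset.sum_mul]
lemma iv_mul_h (s : ℕ) : iv * h s = h (s + 1) := by
  rw [h_eq, h_eq]; ring

lemma Hser_nil : Hser [] = h 0 := by
  rw [Hser, List.reverse_nil, HserRev, h_eq, pow_one]; rfl

lemma Hser_append (l : List ℕ) (x : ℕ) : Hser (l ++ [x]) = U x (iv * Hser l) := by
  rw [Hser, Hser, List.reverse_append]
  rfl

lemma sort_insert_top {a : ℕ} {s : Finset ℕ} (hlt : ∀ b ∈ s, b < a) :
    (insert a s).sort (· ≤ ·) = s.sort (· ≤ ·) ++ [a] := by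
  have ha : a ∉ s := fun hmem => lt_irrefl a (hlt a hmem)
  haveI : IsAntisymm ℕ (· ≤ ·) := ⟨fun _ _ h1 h2 => le_antisymm h1 h2⟩
  refine (fun hp h1 h2 => List.Perm.eq_of_pairwise' (r := (· ≤ ·)) h1 h2 hp) ?_ ?_ ?_
  · exact (((Finset.sort_perm_toList _ _).trans (Finset.toList_insert ha)).trans
      (List.Perm.cons a (Finset.sort_perm_toList _ _).symm)).trans
      (List.perm_append_singleton a _).symm
  · exact Finset.pairwise_sort _ _
  · rw [List.pairwise_append]
    refine ⟨Finset.pairwise_sort _ _, List.pairwise_singleton _ _, ?_⟩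
    intro x hx y hy
    rw [List.mem_singleton] at hy
    subst hy
    exact le_of_lt (hlt x ((Finset.mem_sort _).mp hx))

lemma HJ_insert (m : ℕ → ℕ) (a : ℕ) (J : Finset ℕ) (hJ : ∀ b ∈ J, b < a) :
    Hser (((insert a J).sort (· ≤ ·)).map m) = U (m a) (iv * Hser ((J.sort (· ≤ ·)).map m)) := by
  rw [sort_insert_top hJ, List.map_append]
  exact Hser_append _ _
def Sfin (k : ℕ) : Finset (Finset ℕ) :=
  (Finset.Icc 1 k).powerset.filter (fun J => J.Nonempty ∧ J ≠ Finset.Icc 1 k)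

def Nfin (k : ℕ) : Finset (Finset ℕ) :=
  (Finset.Icc 1 k).powerset.filter (fun J => J.Nonempty)

lemma mem_Sfin {k : ℕ} {J : Finset ℕ} :
    J ∈ Sfin k ↔ J ⊆ Finset.Icc 1 k ∧ J.Nonempty ∧ J ≠ Finset.Icc 1 k := by
  simp [Sfin, and_assoc]

lemma mem_Nfin {k : ℕ} {J : Finset ℕ} :
    J ∈ Nfin k ↔ J ⊆ Finset.Icc 1 k ∧ J.Nonempty := by
  simp [Nfin]

lemma Icc_succ_insert (k : ℕ) (hk : 1 ≤ k) :
    Finset.Icc 1 (k+1) = insert (k+1) (Finset.Icc 1 k) := by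
  ext x; simp only [mem_Icc, mem_insert]; omega

lemma lt_of_mem_Icc {k x : ℕ} (hx : x ∈ Finset.Icc 1 k) : x < k + 1 := by
  simp only [mem_Icc] at hx; omega

lemma not_mem_of_subset_Icc {k : ℕ} {J : Finset ℕ} (hJ : J ⊆ Finset.Icc 1 k) : k + 1 ∉ J := by
  intro hmem
  have := hJ hmem
  simp only [mem_Icc] at this; omega

lemma erase_Icc_succ (k : ℕ) (hk : 1 ≤ k) :
    (Finset.Icc 1 (k+1)).erase (k+1) = Finset.Icc 1 k := by
  ext x; simp only [Finset.mem_erase, mem_Icc]; omega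

lemma Sout_eq (k : ℕ) (hk : 1 ≤ k) :
    (Sfin (k+1)).filter (fun J => k+1 ∉ J) = Nfin k := by
  ext J
  simp only [Finset.mem_filter, mem_Sfin, mem_Nfin]
  constructor
  · rintro ⟨⟨hsub, hne, _⟩, hnm⟩
    refine ⟨fun x hx => ?_, hne⟩
    have := hsub hx
    simp only [mem_Icc] at this ⊢
    have : x ≠ k + 1 := fun hxe => hnm (hxe ▸ hx)
    omega
  · rintro ⟨hsub, hne⟩
    have hnm : k + 1 ∉ J := not_mem_of_subset_Icc hsub
    refine ⟨⟨fun x hx => ?_, hne, fun hJe => ?_⟩, hnm⟩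
    · have := hsub hx; simp only [mem_Icc] at this ⊢; omega
    · apply hnm
      rw [hJe]; simp only [mem_Icc]; omega

lemma Sin_eq (k : ℕ) (hk : 1 ≤ k) :
    (Sfin (k+1)).filter (fun J => k+1 ∈ J)
      = insert {k+1} ((Sfin k).image (insert (k+1))) := by
  ext J
  simp only [Finset.mem_filter, mem_Sfin, Finset.mem_insert, Finset.mem_image]
  constructor
  · rintro ⟨⟨hsub, hne, hneq⟩, hmem⟩
    rcases (J.erase (k+1)).eq_empty_or_nonempty with he | he
    · left
      rw [Finset.erase_eq_empty_iff] at he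
      rcases he with he | he
      · exact absurd he (Finset.nonempty_iff_ne_empty.mp hne)
      · exact he
    · right
      refine ⟨J.erase (k+1), ⟨fun x hx => ?_, he, fun hJe => ?_⟩,
        Finset.insert_erase hmem⟩
      · have hx' := Finset.mem_of_mem_erase hx
        have hxne := Finset.ne_of_mem_erase hx
        have := hsub hx'
        simp only [mem_Icc] at this ⊢; omega
      · apply hneq
        rw [← Finset.insert_erase hmem, hJe, ← Icc_succ_insert k hk]
  · rintro (rfl | ⟨J', hJ', rfl⟩)
    · refine ⟨⟨fun x hx => ?_, ⟨k+1, Finset.mem_singleton_self _⟩, fun hJe => ?_⟩,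
        Finset.mem_singleton_self _⟩
      · rw [Finset.mem_singleton] at hx; subst hx; simp only [mem_Icc]; omega
      · have h1 : (1:ℕ) ∈ Finset.Icc 1 (k+1) := by simp only [mem_Icc]; omega
        rw [← hJe, Finset.mem_singleton] at h1
        omega
    · obtain ⟨hsub, hne, hneq⟩ := hJ'
      have hnm : k + 1 ∉ J' := not_mem_of_subset_Icc hsub
      refine ⟨⟨fun x hx => ?_, ?_, fun hJe => ?_⟩, Finset.mem_insert_self _ _⟩
      · rcases Finset.mem_insert.mp hx with rfl | hx'
        · simp only [mem_Icc]; omega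
        · have := hsub hx'; simp only [mem_Icc] at this ⊢; omega
      · exact ⟨k+1, Finset.mem_insert_self _ _⟩
      · apply hneq
        have := congrArg (fun (S : Finset ℕ) => S.erase (k+1)) hJe
        simpa only [Finset.erase_insert hnm, erase_Icc_succ k hk] using this
  
lemma Nfin_succ_eq (k : ℕ) :
    Nfin (k+1) = insert (Finset.Icc 1 (k+1)) (Sfin (k+1)) := by
  ext J
  simp only [mem_Nfin, mem_Sfin, Finset.mem_insert]
  constructor
  · rintro ⟨hsub, hne⟩
    by_cases hJe : J = Finset.Icc 1 (k+1)
    · exact Or.inl hJe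
    · exact Or.inr ⟨hsub, hne, hJe⟩
  · rintro (rfl | ⟨hsub, hne, _⟩)
    · exact ⟨le_refl _, ⟨1, by simp only [mem_Icc]; omega⟩⟩
    · exact ⟨hsub, hne⟩

lemma Icc_not_mem_Sfin (k : ℕ) : Finset.Icc 1 (k+1) ∉ Sfin (k+1) := by
  rw [mem_Sfin]; tauto

lemma sdiff_out {k : ℕ} {J : Finset ℕ} (hJ : J ⊆ Finset.Icc 1 k) :
    Finset.Icc 1 (k+1) \ J = insert (k+1) (Finset.Icc 1 k \ J) := by
  have := not_mem_of_subset_Icc hJ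
  ext x
  simp only [Finset.mem_sdiff, mem_Icc, Finset.mem_insert]
  constructor
  · rintro ⟨hx, hnx⟩
    by_cases hxe : x = k+1
    · exact Or.inl hxe
    · exact Or.inr ⟨by omega, hnx⟩
  · rintro (rfl | ⟨hx, hnx⟩)
    · exact ⟨by omega, this⟩
    · exact ⟨by omega, hnx⟩

lemma sdiff_in {k : ℕ} {J : Finset ℕ} (hJ : J ⊆ Finset.Icc 1 (k+1)) (hmem : k+1 ∈ J) :
    Finset.Icc 1 (k+1) \ J = Finset.Icc 1 k \ (J.erase (k+1)) := by
  ext x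
  simp only [Finset.mem_sdiff, mem_Icc, Finset.mem_erase]
  constructor
  · rintro ⟨hx, hnx⟩
    have hxne : x ≠ k + 1 := fun hxe => hnx (hxe ▸ hmem)
    exact ⟨by omega, fun hx' => hnx hx'.2⟩
  · rintro ⟨hx, hnx⟩
    refine ⟨by omega, fun hx' => hnx ⟨by omega, hx'⟩⟩

lemma mu_dvd_self (a b : ℕ) : mu a b ∣ a := Nat.div_dvd_of_dvd (Nat.gcd_dvd_left a b)
lemma main_ind (m : ℕ → ℕ) (k : ℕ) (hk : 1 ≤ k) (hm : ∀ j, 1 ≤ j → j ≤ k → 1 ≤ m j) :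
    (∃ β : Finset ℕ → ℤ,
      (Hser (((Finset.Icc 1 k).sort (· ≤ ·)).map m) =
        C (∏ t ∈ Finset.Icc 1 k, (m t : ℤ) ^ t) * h k -
          ∑ J ∈ Sfin k, C (β J) * Hser ((J.sort (· ≤ ·)).map m)) ∧
      ∀ J ∈ Sfin k, ((∏ t ∈ Finset.Icc 1 k \ J, mu (m t) t : ℕ) : ℤ) ∣ β J)
    ∧
    (∃ γ : ℕ → Finset ℕ → ℤ, ∀ s, 1 ≤ s → s ≤ k →
      (C (∏ t ∈ Finset.Icc 1 k, (m t : ℤ) ^ t) * h s =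
          ∑ J ∈ Nfin k, C (γ s J) * Hser ((J.sort (· ≤ ·)).map m)) ∧
      ∀ J ∈ Nfin k, ((∏ t ∈ Finset.Icc 1 k \ J, mu (m t) t : ℕ) : ℤ) ∣ γ s J) := by
  revert hm
  induction k, hk using Nat.le_induction with
  | base =>
    intro hm
    have hIcc : Finset.Icc 1 1 = {1} := Finset.Icc_self 1
    have hsort : ((Finset.Icc 1 1).sort (· ≤ ·)).map m = [m 1] := by
      rw [hIcc, Finset.sort_singleton, List.map_singleton]
    have hU : Hser [m 1] = U (m 1) (h 1) := by
      have h1 := Hser_append [] (m 1)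
      simp only [List.nil_append] at h1
      rw [h1, Hser_nil, iv_mul_h]
    obtain ⟨b, hbdvd, hbeq⟩ := lemA (m 1) 1 (hm 1 le_rfl le_rfl) le_rfl
    have hIcc0 : Finset.Icc 1 (1-1) = ∅ := by
      rw [show (1:ℕ) - 1 = 0 from rfl]
      exact Finset.Icc_eq_empty (by omega)
    rw [hIcc0, Finset.sum_empty, add_zero] at hbeq
    have hprod : (∏ t ∈ Finset.Icc 1 1, (m t : ℤ) ^ t) = (m 1 : ℤ) := by
      rw [hIcc, Finset.prod_singleton, pow_one]
    have hSfin : Sfin 1 = ∅ := by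
      ext J
      simp only [mem_Sfin, Finset.notMem_empty, iff_false, not_and]
      intro hsub hne hneq
      rw [hIcc] at hsub hneq
      rcases Finset.subset_singleton_iff.mp hsub with rfl | rfl
      · exact Finset.nonempty_iff_ne_empty.mp hne rfl
      · exact hneq rfl
    have hmain : Hser (((Finset.Icc 1 1).sort (· ≤ ·)).map m) =
        C (∏ t ∈ Finset.Icc 1 1, (m t : ℤ) ^ t) * h 1 := by
      rw [hsort, hU, hbeq, hprod]
      norm_num
    have hNfin : Nfin 1 = {{1}} := by
      ext J
      simp only [mem_Nfin, Finset.mem_singleton]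
      constructor
      · rintro ⟨hsub, hne⟩
        rw [hIcc] at hsub
        rcases Finset.subset_singleton_iff.mp hsub with rfl | rfl
        · exact absurd rfl (Finset.nonempty_iff_ne_empty.mp hne)
        · rfl
      · rintro rfl
        exact ⟨by rw [hIcc], ⟨1, Finset.mem_singleton_self 1⟩⟩
    constructor
    · refine ⟨fun _ => 0, ?_, ?_⟩
      · rw [hSfin, Finset.sum_empty, sub_zero, hmain]
      · intro J hJ; rw [hSfin] at hJ; exact absurd hJ (Finset.notMem_empty J)
    · refine ⟨fun _ J => if J = {1} then 1 else 0, ?_⟩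
      intro s hs1 hs2
      have hs : s = 1 := by omega
      subst hs
      have hcoef : (fun (_:ℕ) (J : Finset ℕ) => if J = {1} then (1:ℤ) else 0) 1 {1} = 1 := by
        simp
      constructor
      · rw [hNfin, Finset.sum_singleton, hcoef, map_one, one_mul, Finset.sort_singleton,
          List.map_singleton, ← hsort, hmain]
      · intro J hJ
        rw [hNfin, Finset.mem_singleton] at hJ
        subst hJ
        rw [hcoef, hIcc, Finset.sdiff_self, Finset.prod_empty]
        simp
  | succ k hk IH =>
    intro hm
    obtain ⟨⟨β, hβeq, hβdvd⟩, ⟨γ, hγ⟩⟩ := IH (fun j h1 h2 => hm j h1 (by omega))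
    obtain ⟨b, hbdvd, hbeq⟩ := lemA (m (k+1)) (k+1) (hm (k+1) (by omega) le_rfl) (by omega)
    rw [Nat.add_sub_cancel] at hbeq
    set M : ℕ := m (k+1) with hM
    set P : ℤ := ∏ t ∈ Finset.Icc 1 k, (m t : ℤ) ^ t with hPdef
    set P' : ℤ := ∏ t ∈ Finset.Icc 1 (k+1), (m t : ℤ) ^ t with hP'def
    have hknotmem : (k+1) ∉ Finset.Icc 1 k := by simp only [mem_Icc]; omega
    have hP' : P' = (M : ℤ) ^ (k+1) * P := by
      rw [hP'def, Icc_succ_insert k hk, Finset.prod_insert hknotmem, hPdef]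
    set β' : Finset ℕ → ℤ := fun J =>
      if k+1 ∈ J then (if (J.erase (k+1)).Nonempty then β (J.erase (k+1)) else 0)
      else -(∑ s ∈ Finset.Icc 1 k, b s * γ s J) with hβ'def
    -- step e0
    have e0 : Hser (((Finset.Icc 1 (k+1)).sort (· ≤ ·)).map m)
        = U M (iv * Hser (((Finset.Icc 1 k).sort (· ≤ ·)).map m)) := by
      have := HJ_insert m (k+1) (Finset.Icc 1 k) (fun b hb => lt_of_mem_Icc hb)
      rw [← Icc_succ_insert k hk] at this
      exact this
    have e1 : iv * (C P * h k - ∑ J ∈ Sfin k, C (β J) * Hser ((J.sort (· ≤ ·)).map m))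
        = C P * h (k+1)
          - ∑ J ∈ Sfin k, C (β J) * (iv * Hser ((J.sort (· ≤ ·)).map m)) := by
      rw [mul_sub, Finset.mul_sum]
      congr 1
      · rw [mul_left_comm, iv_mul_h]
      · exact Finset.sum_congr rfl (fun J _ => mul_left_comm _ _ _)
    have e2 : U M (C P * h (k+1)
          - ∑ J ∈ Sfin k, C (β J) * (iv * Hser ((J.sort (· ≤ ·)).map m)))
        = C P * U M (h (k+1))
          - ∑ J ∈ Sfin k, C (β J) * Hser (((insert (k+1) J).sort (· ≤ ·)).map m) := by
      rw [U_sub, U_C_mul, U_sum]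
      congr 1
      refine Finset.sum_congr rfl (fun J hJ => ?_)
      rw [U_C_mul, ← HJ_insert m (k+1) J (fun x hx => lt_of_mem_Icc ((mem_Sfin.mp hJ).1 hx))]
    have e3 : C P * U M (h (k+1))
        = C P' * h (k+1) + ∑ s ∈ Finset.Icc 1 k, C (b s) * (C P * h s) := by
      rw [hbeq, mul_add, Finset.mul_sum, hP']
      congr 1
      · rw [← mul_assoc, ← map_mul, mul_comm P ((M:ℤ)^(k+1)), map_mul]
      · exact Finset.sum_congr rfl (fun s _ => mul_left_comm _ _ _)
    have hmain : Hser (((Finset.Icc 1 (k+1)).sort (· ≤ ·)).map m)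
        = C P' * h (k+1) + ∑ s ∈ Finset.Icc 1 k, C (b s) * (C P * h s)
          - ∑ J ∈ Sfin k, C (β J) * Hser (((insert (k+1) J).sort (· ≤ ·)).map m) := by
      rw [e0, hβeq, e1, e2, e3]
    -- sum rearrangement
    have hin : ∑ J ∈ (Sfin (k+1)).filter (fun J => k+1 ∈ J),
          C (β' J) * Hser ((J.sort (· ≤ ·)).map m)
        = ∑ J ∈ Sfin k, C (β J) * Hser (((insert (k+1) J).sort (· ≤ ·)).map m) := by
      rw [Sin_eq k hk]
      have hnm : ({k+1} : Finset ℕ) ∉ (Sfin k).image (insert (k+1)) := by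
        rw [Finset.mem_image]
        rintro ⟨J', hJ', hins⟩
        obtain ⟨x, hx⟩ := (mem_Sfin.mp hJ').2.1
        have hxm : x ∈ insert (k+1) J' := Finset.mem_insert_of_mem hx
        rw [hins, Finset.mem_singleton] at hxm
        exact not_mem_of_subset_Icc (mem_Sfin.mp hJ').1 (hxm ▸ hx)
      rw [Finset.sum_insert hnm]
      have hz : β' {k+1} = 0 := by
        simp [hβ'def]
      rw [hz, map_zero, zero_mul, zero_add]
      rw [Finset.sum_image (fun x hx y hy hxy => by
        have := congrArg (fun (S : Finset ℕ) => S.erase (k+1)) hxy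
        simpa only [Finset.erase_insert (not_mem_of_subset_Icc (mem_Sfin.mp hx).1),
          Finset.erase_insert (not_mem_of_subset_Icc (mem_Sfin.mp hy).1)] using this)]
      refine Finset.sum_congr rfl (fun J hJ => ?_)
      congr 1
      have hnmJ : k+1 ∉ J := not_mem_of_subset_Icc (mem_Sfin.mp hJ).1
      have hne := (mem_Sfin.mp hJ).2.1
      simp [hβ'def, Finset.erase_insert hnmJ, hne]
    have hout : ∑ J ∈ (Sfin (k+1)).filter (fun J => ¬ k+1 ∈ J),
          C (β' J) * Hser ((J.sort (· ≤ ·)).map m)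
        = -∑ s ∈ Finset.Icc 1 k, C (b s) * (C P * h s) := by
      rw [Sout_eq k hk]
      have hterm : ∀ J ∈ Nfin k, C (β' J) * Hser ((J.sort (· ≤ ·)).map m)
          = -∑ s ∈ Finset.Icc 1 k,
              C (b s) * (C (γ s J) * Hser ((J.sort (· ≤ ·)).map m)) := by
        intro J hJ
        have hnm : k+1 ∉ J := not_mem_of_subset_Icc (mem_Nfin.mp hJ).1
        simp only [hβ'def, if_neg hnm]
        rw [map_neg, map_sum, neg_mul, Finset.sum_mul]
        congr 1
        refine Finset.sum_congr rfl (fun s _ => ?_)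
        rw [map_mul, mul_assoc]
      rw [Finset.sum_congr rfl hterm, Finset.sum_neg_distrib, neg_inj, Finset.sum_comm]
      refine Finset.sum_congr rfl (fun s hs => ?_)
      simp only [mem_Icc] at hs
      rw [← Finset.mul_sum, ← (hγ s hs.1 hs.2).1]
    have hsum : ∑ J ∈ Sfin (k+1), C (β' J) * Hser ((J.sort (· ≤ ·)).map m)
        = ∑ J ∈ Sfin k, C (β J) * Hser (((insert (k+1) J).sort (· ≤ ·)).map m)
          - ∑ s ∈ Finset.Icc 1 k, C (b s) * (C P * h s) := by
      rw [← Finset.sum_filter_add_sum_filter_not (Sfin (k+1)) (fun J => k+1 ∈ J), hin, hout]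
      ring
    have hTeq : Hser (((Finset.Icc 1 (k+1)).sort (· ≤ ·)).map m)
        = C P' * h (k+1) - ∑ J ∈ Sfin (k+1), C (β' J) * Hser ((J.sort (· ≤ ·)).map m) := by
      rw [hmain, hsum]; ring
    have hTdvd : ∀ J ∈ Sfin (k+1),
        ((∏ t ∈ Finset.Icc 1 (k+1) \ J, mu (m t) t : ℕ) : ℤ) ∣ β' J := by
      intro J hJ
      obtain ⟨hsub, hne, hneq⟩ := mem_Sfin.mp hJ
      simp only [hβ'def]
      by_cases hmem : k+1 ∈ J
      · rw [if_pos hmem]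
        by_cases her : (J.erase (k+1)).Nonempty
        · rw [if_pos her, sdiff_in hsub hmem]
          apply hβdvd
          rw [mem_Sfin]
          refine ⟨fun x hx => ?_, her, fun hJe => ?_⟩
          · have hx' := Finset.mem_of_mem_erase hx
            have hxne := Finset.ne_of_mem_erase hx
            have := hsub hx'
            simp only [mem_Icc] at this ⊢; omega
          · exact hneq (by rw [← Finset.insert_erase hmem, hJe, ← Icc_succ_insert k hk])
        · rw [if_neg her]; exact dvd_zero _
      · rw [if_neg hmem]
        rw [dvd_neg]
        have hsub' : J ⊆ Finset.Icc 1 k := by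
          intro x hx
          have := hsub hx
          have hxne : x ≠ k+1 := fun hxe => hmem (hxe ▸ hx)
          simp only [mem_Icc] at this ⊢; omega
        rw [sdiff_out hsub', Finset.prod_insert (fun hc => hknotmem (Finset.mem_sdiff.mp hc).1),
          Nat.cast_mul]
        apply Finset.dvd_sum
        intro s hs
        simp only [mem_Icc] at hs
        exact mul_dvd_mul (hbdvd s) ((hγ s hs.1 hs.2).2 J (mem_Nfin.mpr ⟨hsub', hne⟩))
    refine ⟨⟨β', hTeq, hTdvd⟩, ?_⟩
    -- the G part
    set γ' : ℕ → Finset ℕ → ℤ := fun s J =>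
      if s = k+1 then (if J = Finset.Icc 1 (k+1) then 1 else β' J)
      else if J ∈ Nfin k then (M:ℤ)^(k+1) * γ s J else 0 with hγ'def
    refine ⟨γ', fun s hs1 hs2 => ?_⟩
    by_cases hsk : s = k+1
    · subst hsk
      constructor
      · rw [Nfin_succ_eq, Finset.sum_insert (Icc_not_mem_Sfin k)]
        have h1 : γ' (k+1) (Finset.Icc 1 (k+1)) = 1 := by
          simp [hγ'def]
        have h2 : ∀ J ∈ Sfin (k+1), C (γ' (k+1) J) * Hser ((J.sort (· ≤ ·)).map m)
            = C (β' J) * Hser ((J.sort (· ≤ ·)).map m) := by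
          intro J hJ
          have hne := (mem_Sfin.mp hJ).2.2
          simp [hγ'def, hne]
        rw [h1, map_one, one_mul, Finset.sum_congr rfl h2, hTeq]
        ring
      · intro J hJ
        simp only [hγ'def, if_pos rfl]
        by_cases hJe : J = Finset.Icc 1 (k+1)
        · rw [if_pos hJe, hJe, Finset.sdiff_self, Finset.prod_empty]
          exact one_dvd _
        · rw [if_neg hJe]
          apply hTdvd
          rw [Nfin_succ_eq, Finset.mem_insert] at hJ
          tauto
    · have hsle : s ≤ k := by omega
      constructor
      · have hNsub : Nfin k ⊆ Nfin (k+1) := by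
          intro J hJ
          rw [mem_Nfin] at hJ ⊢
          exact ⟨hJ.1.trans (Finset.Icc_subset_Icc_right (by omega)), hJ.2⟩
        rw [hP', map_mul, mul_assoc, (hγ s hs1 hsle).1, Finset.mul_sum]
        symm
        apply Finset.sum_subset hNsub ?_ |>.symm.trans ?_
        · intro J hJ hJn
          simp only [hγ'def, if_neg hsk, if_neg hJn]
          rw [map_zero, zero_mul]
        · refine Finset.sum_congr rfl (fun J hJ => ?_)
          rw [hγ'def]
          simp only [if_neg hsk, if_pos hJ]
          rw [map_mul, mul_assoc]
      · intro J hJ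
        simp only [hγ'def, if_neg hsk]
        by_cases hJn : J ∈ Nfin k
        · rw [if_pos hJn]
          rw [sdiff_out (mem_Nfin.mp hJn).1,
            Finset.prod_insert (fun hc => hknotmem (Finset.mem_sdiff.mp hc).1), Nat.cast_mul]
          apply mul_dvd_mul
          · have hd := Int.natCast_dvd_natCast.mpr
              ((mu_dvd_self M (k+1)).trans (dvd_pow_self M (Nat.succ_ne_zero k)))
            rwa [Nat.cast_pow] at hd
          · exact (hγ s hs1 hsle).2 J hJn
        · rw [if_neg hJn]; exact dvd_zero _

/-- There exist integers `β_{(j₁,…,j_s)}` with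
`H_{(m₁,…,m_r)} = m₁ m₂² ⋯ m_r^r · h_r - ∑ β_{(j₁,…,j_s)} · H_{(m_{j₁},…,m_{j_s})}`,
and each `β_{(j₁,…,j_s)}` is divisible by `∏_{t ∈ {1,…,r} \ {j₁,…,j_s}} μ(m_t, t)`. -/
theorem H_linear_combination_beta_dvd (r : ℕ) (hr : 1 ≤ r) (m : ℕ → ℕ)
    (hm : ∀ j, 1 ≤ j → j ≤ r → 2 ≤ m j) :
    ∃ β : Finset ℕ → ℤ,
      (Hser (((Finset.Icc 1 r).sort (· ≤ ·)).map m) =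
        PowerSeries.C (∏ t ∈ Finset.Icc 1 r, (m t : ℤ) ^ t) * h r -
          ∑ J ∈ (Finset.Icc 1 r).powerset.filter
              (fun J => J.Nonempty ∧ J ≠ Finset.Icc 1 r),
            PowerSeries.C (β J) * Hser ((J.sort (· ≤ ·)).map m)) ∧
      ∀ J ∈ (Finset.Icc 1 r).powerset.filter
          (fun J => J.Nonempty ∧ J ≠ Finset.Icc 1 r),
        ((∏ t ∈ Finset.Icc 1 r \ J, mu (m t) t : ℕ) : ℤ) ∣ β J := by
  obtain ⟨⟨β, hβeq, hβdvd⟩, -⟩ :=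
    main_ind m r hr (fun j h1 h2 => le_trans (by omega) (hm j h1 h2))
  exact ⟨β, hβeq, hβdvd⟩
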